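/- For all real numbers x, y > 0 and every κ > 1, the inequality x ≤ κ·y + (1/ln κ)·(y − x)·ln(y/x) holds. -/
import Mathlib

theorem stmt_0 (x y κ : ℝ) (hx : 0 < x) (hy : 0 < y) (hκ : 1 < κ) :
    x ≤ κ * y + (1 / Real.log κ) * (y - x) * Real.log (y / x) := by
  have hlκ : 0 < Real.log κ := Real.log_pos hκ
  rcases le_or_gt x (κ * y) with h | h
  · -- second term nonneg
    have hT : 0 ≤ (y - x) * Real.log (y / x) := by
      rcases le_total x y with hxy | hxy
      · apply mul_nonneg (by linarith)
        apply Real.log_nonneg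
        rw [le_div_iff₀ hx]; linarith
      · have h1 : Real.log (y / x) ≤ 0 := by
          apply Real.log_nonpos
          · positivity
          · rw [div_le_one hx]; exact hxy
        nlinarith
    nlinarith [mul_nonneg (le_of_lt (one_div_pos.mpr hlκ)) hT]
  · -- x > κ y, so x > y and log(x/y) > log κ
    have hxy : y < x := by nlinarith
    have hlog : Real.log κ ≤ Real.log (x / y) := by
      apply Real.log_le_log (by linarith)
      rw [le_div_iff₀ hy]; linarith
    have hrw : Real.log (y / x) = - Real.log (x / y) := by
      rw [← Real.log_inv]; congr 1; field_simp
    rw [hrw]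
    have key : (x - y) * Real.log κ ≤ (x - y) * Real.log (x / y) :=
      mul_le_mul_of_nonneg_left hlog (by linarith)
    have h2 : x - y ≤ (x - y) * Real.log (x / y) / Real.log κ :=
      (le_div_iff₀ hlκ).mpr key
    have h3 : (x - y) * Real.log (x / y) / Real.log κ
        = 1 / Real.log κ * (y - x) * -Real.log (x / y) := by ring
    rw [h3] at h2
    nlinarith
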